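/- Let X and X̄ be contracting matrices in GL(n,ℝ) and let S, S̄ be symmetric positive definite real n×n matrices. Define c := [[X, 0], [X + (Xᵀ)⁻¹S, (Xᵀ)⁻¹]] and c̄ := [[(X̄ᵀ)⁻¹, −(X̄ᵀ)⁻¹ − S̄X̄], [0, X̄]]; both lie in Sp(2n,ℝ). Then there exists g ∈ Sp(2n,ℝ) with g·c⁻¹·g⁻¹ = c̄ if and only if there exists G ∈ GL(n,ℝ) with X̄ = G·Xᵀ·G⁻¹, i.e. if and only if Xᵀ and X̄ are conjugate in GL(n,ℝ). -/

import Mathlib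

open Matrix

/-- The standard symplectic form matrix `J = [[0, 1], [-1, 0]]` in `2n × 2n` block form. -/
def Jmat (n : ℕ) : Matrix (Fin n ⊕ Fin n) (Fin n ⊕ Fin n) ℝ :=
  Matrix.fromBlocks 0 1 (-1) 0

/-- Membership in the real symplectic group `Sp(2n, ℝ)`: `gᵀ J g = J`. -/
def IsSymplectic {n : ℕ} (g : Matrix (Fin n ⊕ Fin n) (Fin n ⊕ Fin n) ℝ) : Prop :=
  gᵀ * Jmat n * g = Jmat n

/-- A real square matrix is contracting if every complex root of its characteristic
polynomial has absolute value strictly less than `1`. -/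
def Contracting {n : ℕ} (A : Matrix (Fin n) (Fin n) ℝ) : Prop :=
  ∀ μ : ℂ, (A.map (algebraMap ℝ ℂ)).charpoly.IsRoot μ → ‖μ‖ < 1

section Aux

open Polynomial Filter
open scoped ENNReal NNReal

set_option maxHeartbeats 1600000

variable {n : ℕ}

attribute [local instance] Matrix.linftyOpNormedRing Matrix.linftyOpNormedAlgebra

private noncomputable local instance : CompleteSpace (Matrix (Fin n) (Fin n) ℂ) :=
  FiniteDimensional.complete ℂ _

private lemma aux_mem_spectrum_iff_root (M : Matrix (Fin n) (Fin n) ℂ) (μ : ℂ) :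
    μ ∈ spectrum ℂ M ↔ M.charpoly.IsRoot μ := by
  have hmat : M.charmatrix.map (eval μ) = (algebraMap ℂ (Matrix (Fin n) (Fin n) ℂ)) μ - M := by
    ext i j
    by_cases h : i = j <;>
      simp [h, charmatrix_apply, Matrix.algebraMap_matrix_apply, Matrix.diagonal_apply]
  rw [spectrum.mem_iff, Matrix.isUnit_iff_isUnit_det, isUnit_iff_ne_zero, not_not,
    IsRoot, Matrix.charpoly, ← coe_evalRingHom, RingHom.map_det, RingHom.mapMatrix_apply,
    coe_evalRingHom, hmat]

private lemma aux_spectralRadius_lt_one {A : Matrix (Fin n) (Fin n) ℝ} (hA : Contracting A) :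
    spectralRadius ℂ (A.map (algebraMap ℝ ℂ)) < 1 := by
  set M := A.map (algebraMap ℝ ℂ) with hM
  have hfin : (spectrum ℂ M).Finite :=
    Set.Finite.subset (Polynomial.finite_setOf_isRoot (M.charpoly_monic.ne_zero))
      (fun μ hμ => (aux_mem_spectrum_iff_root M μ).mp hμ)
  set t := hfin.toFinset with ht
  have hr : t.sup (fun k => ‖k‖₊) < 1 := by
    rw [Finset.sup_lt_iff (by norm_num : (⊥ : NNReal) < 1)]
    intro μ hμ
    have := hA μ ((aux_mem_spectrum_iff_root M μ).mp (hfin.mem_toFinset.mp hμ))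
    rw [← NNReal.coe_lt_coe, coe_nnnorm]
    exact this
  calc spectralRadius ℂ M ≤ (t.sup (fun k => ‖k‖₊) : ℝ≥0∞) := by
        apply iSup₂_le
        intro μ hμ
        exact_mod_cast ENNReal.coe_le_coe.mpr (Finset.le_sup (hfin.mem_toFinset.mpr hμ))
    _ < 1 := by exact_mod_cast hr

private lemma aux_exists_pow_nnnorm_mul_lt {A B : Matrix (Fin n) (Fin n) ℝ}
    (hA : Contracting A) (hB : Contracting B) :
    ∃ k : ℕ, 0 < k ∧
      (‖(A.map (algebraMap ℝ ℂ)) ^ k‖₊ : ℝ≥0∞) * ‖(B.map (algebraMap ℝ ℂ)) ^ k‖₊ < 1 := by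
  set M := A.map (algebraMap ℝ ℂ)
  set N := B.map (algebraMap ℝ ℂ)
  have hM := spectrum.pow_nnnorm_pow_one_div_tendsto_nhds_spectralRadius M
  have hN := spectrum.pow_nnnorm_pow_one_div_tendsto_nhds_spectralRadius N
  have hmul : Tendsto (fun k : ℕ => (‖M ^ k‖₊ : ℝ≥0∞) ^ (1 / (k:ℝ)) * (‖N ^ k‖₊ : ℝ≥0∞) ^ (1 / (k:ℝ)))
      atTop (nhds (spectralRadius ℂ M * spectralRadius ℂ N)) := by
    apply ENNReal.Tendsto.mul hM ?_ hN ?_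
    · exact Or.inr ((aux_spectralRadius_lt_one hB).trans ENNReal.one_lt_top).ne
    · exact Or.inr ((aux_spectralRadius_lt_one hA).trans ENNReal.one_lt_top).ne
  have hlt : spectralRadius ℂ M * spectralRadius ℂ N < 1 :=
    lt_of_le_of_lt (mul_le_mul_right (le_of_lt (aux_spectralRadius_lt_one hB)) _)
      (by rw [mul_one]; exact aux_spectralRadius_lt_one hA)
  have hev := hmul.eventually_lt_const hlt
  obtain ⟨k, hk, hk1⟩ := ((hev.and (eventually_gt_atTop 0)).exists)
  refine ⟨k, hk1, ?_⟩
  clear hM hN hmul hlt hev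
  by_contra h
  push_neg at h
  have h2 : (1:ℝ≥0∞) ≤ ((‖M ^ k‖₊ : ℝ≥0∞) * ‖N ^ k‖₊) ^ (1 / (k:ℝ)) := by
    calc (1:ℝ≥0∞) = 1 ^ (1/(k:ℝ)) := (ENNReal.one_rpow _).symm
      _ ≤ _ := ENNReal.rpow_le_rpow h (by positivity)
  rw [ENNReal.mul_rpow_of_nonneg _ _ (by positivity)] at h2
  exact absurd hk (not_lt.mpr h2)

private lemma aux_sylvester_inj {A B : Matrix (Fin n) (Fin n) ℝ}
    (hA : Contracting A) (hB : Contracting B)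
    {R : Matrix (Fin n) (Fin n) ℝ} (h : R = A * R * B) : R = 0 := by
  set f := algebraMap ℝ ℂ
  set M := A.map f
  set N := B.map f
  set R' := R.map f with hR'
  have h1 : R' = M * R' * N := by rw [hR']; conv_lhs => rw [h, Matrix.map_mul, Matrix.map_mul]
  have h' : ∀ k : ℕ, R' = M ^ k * R' * N ^ k := by
    intro k
    induction k with
    | zero => simp
    | succ m ih =>
      calc R' = M ^ m * (M * R' * N) * N ^ m := by rw [← h1]; exact ih
        _ = M ^ (m+1) * R' * N ^ (m+1) := by
            rw [pow_succ, pow_succ]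
            simp only [mul_assoc]
            rw [← pow_mul_comm']
  obtain ⟨k, hk0, hk⟩ := aux_exists_pow_nnnorm_mul_lt hA hB
  have hb : ‖R'‖₊ ≤ (‖M ^ k‖₊ * ‖N ^ k‖₊) * ‖R'‖₊ := by
    calc ‖R'‖₊ = ‖M ^ k * R' * N ^ k‖₊ := by rw [← h' k]
      _ ≤ ‖M ^ k * R'‖₊ * ‖N ^ k‖₊ := Matrix.linfty_opNNNorm_mul _ _
      _ ≤ ‖M ^ k‖₊ * ‖R'‖₊ * ‖N ^ k‖₊ :=
          mul_le_mul_left (Matrix.linfty_opNNNorm_mul _ _) _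
      _ = (‖M ^ k‖₊ * ‖N ^ k‖₊) * ‖R'‖₊ := by ring
  have hmul : ‖M ^ k‖₊ * ‖N ^ k‖₊ < 1 := by exact_mod_cast hk
  have hR0 : ‖R'‖₊ = 0 := by
    by_contra hne
    have hpos : 0 < ‖R'‖₊ := pos_iff_ne_zero.mpr hne
    have : ‖R'‖₊ < ‖R'‖₊ :=
      lt_of_le_of_lt hb (by simpa using mul_lt_mul_of_pos_right hmul hpos)
    exact lt_irrefl _ this
  have hR'0 : R' = 0 := nnnorm_eq_zero.mp hR0
  ext i j
  have := congrFun (congrFun hR'0 i) j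
  simp only [hR', Matrix.map_apply, Matrix.zero_apply] at this ⊢
  exact RingHom.injective f (by simpa using this)

private lemma aux_sylvester_solve {A B : Matrix (Fin n) (Fin n) ℝ}
    (hA : Contracting A) (hB : Contracting B)
    (C : Matrix (Fin n) (Fin n) ℝ) : ∃ M, M - A * M * B = C := by
  let φ : Matrix (Fin n) (Fin n) ℝ →ₗ[ℝ] Matrix (Fin n) (Fin n) ℝ :=
    { toFun := fun R => R - A * R * B
      map_add' := by
        intro x y
        simp only [Matrix.mul_add, Matrix.add_mul]
        abel
      map_smul' := by
        intro c x
        simp [Matrix.mul_smul, Matrix.smul_mul, smul_sub] }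
  have hinj : Function.Injective φ := by
    rw [injective_iff_map_eq_zero φ]
    intro R hR
    apply aux_sylvester_inj hA hB
    have h0 : R - A * R * B = 0 := hR
    linear_combination (norm := module) h0
  have hsurj : Function.Surjective φ := (LinearMap.injective_iff_surjective).mp hinj
  obtain ⟨M, hM⟩ := hsurj C
  exact ⟨M, hM⟩

private lemma aux_contracting_transpose {A : Matrix (Fin n) (Fin n) ℝ} (hA : Contracting A) :
    Contracting Aᵀ := by
  intro μ hμ
  apply hA μ
  have hmap : (Aᵀ).map (algebraMap ℝ ℂ) = ((A.map (algebraMap ℝ ℂ)))ᵀ := by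
    ext i j; simp [Matrix.map_apply, Matrix.transpose_apply]
  have hcp : ((A.map (algebraMap ℝ ℂ))ᵀ).charpoly = (A.map (algebraMap ℝ ℂ)).charpoly := by
    set M := A.map (algebraMap ℝ ℂ)
    have hcm : charmatrix (Mᵀ) = (charmatrix M)ᵀ := by
      ext i j
      by_cases h : i = j <;>
        simp [charmatrix_apply, Matrix.transpose_apply, Matrix.diagonal_apply, h, eq_comm]
    rw [Matrix.charpoly, Matrix.charpoly, hcm, Matrix.det_transpose]
  rwa [hmap, hcp] at hμ

/-- The symmetric Sylvester solution. -/
private lemma aux_sylvester_symm {X C : Matrix (Fin n) (Fin n) ℝ}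
    (hX : Contracting X) (hC : Cᵀ = C) :
    ∃ M, M - Xᵀ * M * X = C ∧ Mᵀ = M := by
  obtain ⟨M, hM⟩ := aux_sylvester_solve (aux_contracting_transpose hX) hX C
  refine ⟨M, hM, ?_⟩
  have hMT : Mᵀ - Xᵀ * Mᵀ * X = C := by
    have h := congrArg Matrix.transpose hM
    simpa [Matrix.transpose_sub, Matrix.transpose_mul, hC, Matrix.mul_assoc] using h
  have key : M - Mᵀ = Xᵀ * (M - Mᵀ) * X := by
    rw [Matrix.mul_sub, Matrix.sub_mul]
    exact sub_eq_sub_iff_sub_eq_sub.mp (hM.trans hMT.symm)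
  have h0 : M - Mᵀ = 0 :=
    aux_sylvester_inj (aux_contracting_transpose hX) hX key
  have := sub_eq_zero.mp h0
  exact this.symm

end Aux

section Symplectic

variable {n : ℕ}

private lemma aux_isSymplectic_mul {g h : Matrix (Fin n ⊕ Fin n) (Fin n ⊕ Fin n) ℝ}
    (hg : IsSymplectic g) (hh : IsSymplectic h) : IsSymplectic (g * h) := by
  unfold IsSymplectic at *
  rw [Matrix.transpose_mul]
  calc hᵀ * gᵀ * (Jmat n) * (g * h) = hᵀ * (gᵀ * Jmat n * g) * h := by
        simp only [Matrix.mul_assoc]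
    _ = Jmat n := by rw [hg]; exact hh

private lemma aux_isSymplectic_fromBlocks {A B C D : Matrix (Fin n) (Fin n) ℝ}
    (h1 : Aᵀ * C = Cᵀ * A) (h2 : Bᵀ * D = Dᵀ * B) (h3 : Aᵀ * D - Cᵀ * B = 1) :
    IsSymplectic (Matrix.fromBlocks A B C D) := by
  have h3' : Dᵀ * A - Bᵀ * C = 1 := by
    have := congrArg Matrix.transpose h3
    simpa [Matrix.transpose_sub, Matrix.transpose_mul] using this
  unfold IsSymplectic Jmat
  rw [Matrix.fromBlocks_transpose, Matrix.fromBlocks_multiply, Matrix.fromBlocks_multiply]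
  simp only [mul_zero, mul_one, zero_add, add_zero, mul_neg_one, zero_mul, neg_zero, neg_mul]
  refine Matrix.fromBlocks_inj.mpr ⟨?_, ?_, ?_, ?_⟩
  · rw [neg_add_eq_sub, ← h1, sub_self]
  · rw [neg_add_eq_sub]; exact h3
  · rw [neg_add_eq_sub, ← neg_sub]; rw [h3']
  · rw [neg_add_eq_sub, ← h2, sub_self]

end Symplectic

theorem stmt12 (n : ℕ) (X Xb S Sb : Matrix (Fin n) (Fin n) ℝ)
    (hX : IsUnit X) (hXb : IsUnit Xb)
    (hXc : Contracting X) (hXbc : Contracting Xb)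
    (hS : S.PosDef) (hSb : Sb.PosDef) :
    let c := Matrix.fromBlocks X 0 (X + Xᵀ⁻¹ * S) Xᵀ⁻¹
    let cb := Matrix.fromBlocks Xbᵀ⁻¹ (-Xbᵀ⁻¹ - Sb * Xb) 0 Xb
    IsSymplectic c ∧ IsSymplectic cb ∧
      ((∃ g : Matrix (Fin n ⊕ Fin n) (Fin n ⊕ Fin n) ℝ,
          IsSymplectic g ∧ g * c⁻¹ * g⁻¹ = cb) ↔
        (∃ G : Matrix (Fin n) (Fin n) ℝ, IsUnit G ∧ Xb = G * Xᵀ * G⁻¹)) := by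
  intro c cb
  -- basic unit facts
  have hXdet : IsUnit X.det := (Matrix.isUnit_iff_isUnit_det _).mp hX
  have hXbdet : IsUnit Xb.det := (Matrix.isUnit_iff_isUnit_det _).mp hXb
  have hXt : IsUnit Xᵀ := (Matrix.isUnit_iff_isUnit_det Xᵀ).mpr (by rw [Matrix.det_transpose]; exact hXdet)
  have hXbt : IsUnit Xbᵀ := (Matrix.isUnit_iff_isUnit_det Xbᵀ).mpr (by rw [Matrix.det_transpose]; exact hXbdet)
  have hX1 : X * X⁻¹ = 1 := Matrix.mul_nonsing_inv X hXdet
  have hX2 : X⁻¹ * X = 1 := Matrix.nonsing_inv_mul X hXdet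
  have hXt1 : Xᵀ * Xᵀ⁻¹ = 1 := Matrix.mul_nonsing_inv Xᵀ ((Matrix.isUnit_iff_isUnit_det _).mp hXt)
  have hXt2 : Xᵀ⁻¹ * Xᵀ = 1 := Matrix.nonsing_inv_mul Xᵀ ((Matrix.isUnit_iff_isUnit_det _).mp hXt)
  have hXb1 : Xb * Xb⁻¹ = 1 := Matrix.mul_nonsing_inv Xb hXbdet
  have hXb2 : Xb⁻¹ * Xb = 1 := Matrix.nonsing_inv_mul Xb hXbdet
  have hXbt1 : Xbᵀ * Xbᵀ⁻¹ = 1 := Matrix.mul_nonsing_inv Xbᵀ ((Matrix.isUnit_iff_isUnit_det _).mp hXbt)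
  have hXbt2 : Xbᵀ⁻¹ * Xbᵀ = 1 := Matrix.nonsing_inv_mul Xbᵀ ((Matrix.isUnit_iff_isUnit_det _).mp hXbt)
  have hXtiT : (Xᵀ⁻¹)ᵀ = X⁻¹ := by
    rw [← Matrix.transpose_nonsing_inv, Matrix.transpose_transpose]
  have hXbtiT : (Xbᵀ⁻¹)ᵀ = Xb⁻¹ := by
    rw [← Matrix.transpose_nonsing_inv, Matrix.transpose_transpose]
  have hSsym : Sᵀ = S := hS.1.eq -- IsHermitian over ℝ
  have hSbsym : Sbᵀ = Sb := hSb.1.eq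
  -- symplecticity of c
  have hsc : IsSymplectic c := by
    apply aux_isSymplectic_fromBlocks
    · -- Xᵀ * (X + Xᵀ⁻¹ * S) = (X + Xᵀ⁻¹ * S)ᵀ * X
      rw [Matrix.transpose_add, Matrix.transpose_mul, hXtiT]
      rw [Matrix.mul_add, Matrix.add_mul]
      congr 1
      · rw [← Matrix.mul_assoc, hXt1, Matrix.one_mul]
        rw [hSsym, Matrix.mul_assoc, hX2, Matrix.mul_one]
      -- note: order: goal Xᵀ * X + Xᵀ*(Xᵀ⁻¹*S) = Xᵀ*X + Sᵀ*X⁻¹*X ... handled by congr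
    · simp
    · rw [Matrix.transpose_add, Matrix.transpose_mul]
      simp [hXt1]
  -- symplecticity of cb
  have hscb : IsSymplectic cb := by
    apply aux_isSymplectic_fromBlocks
    · simp
    · -- (-Xbᵀ⁻¹ - Sb * Xb)ᵀ * Xb = Xbᵀ * (-Xbᵀ⁻¹ - Sb * Xb)
      rw [Matrix.transpose_sub, Matrix.transpose_neg, Matrix.transpose_mul, hXbtiT, hSbsym]
      rw [Matrix.sub_mul, Matrix.mul_sub]
      rw [Matrix.neg_mul, hXb2, Matrix.mul_neg, hXbt1]
      rw [Matrix.mul_assoc]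
    · rw [hXbtiT]
      simp [hXb2]
  refine ⟨hsc, hscb, ?_⟩
  -- Sylvester data
  obtain ⟨M, hM, hMsym⟩ := aux_sylvester_symm hXc
    (C := Xᵀ * X + S) (by rw [Matrix.transpose_add, Matrix.transpose_mul,
      Matrix.transpose_transpose, hSsym])
  obtain ⟨N, hN, hNsym⟩ := aux_sylvester_symm hXbc
    (C := -(1 + Xbᵀ * Sb * Xb)) (by
      rw [Matrix.transpose_neg, Matrix.transpose_add, Matrix.transpose_one,
        Matrix.transpose_mul, Matrix.transpose_mul, Matrix.transpose_transpose, hSbsym,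
        Matrix.mul_assoc])
  -- block matrices
  set u : Matrix (Fin n ⊕ Fin n) (Fin n ⊕ Fin n) ℝ := Matrix.fromBlocks 1 0 M 1 with hu
  set ui : Matrix (Fin n ⊕ Fin n) (Fin n ⊕ Fin n) ℝ := Matrix.fromBlocks 1 0 (-M) 1 with hui
  set v : Matrix (Fin n ⊕ Fin n) (Fin n ⊕ Fin n) ℝ := Matrix.fromBlocks 1 N 0 1 with hv
  set vi : Matrix (Fin n ⊕ Fin n) (Fin n ⊕ Fin n) ℝ := Matrix.fromBlocks 1 (-N) 0 1 with hvi
  set D : Matrix (Fin n ⊕ Fin n) (Fin n ⊕ Fin n) ℝ := Matrix.fromBlocks X⁻¹ 0 0 Xᵀ with hD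
  set Di : Matrix (Fin n ⊕ Fin n) (Fin n ⊕ Fin n) ℝ := Matrix.fromBlocks X 0 0 Xᵀ⁻¹ with hDi
  set Db : Matrix (Fin n ⊕ Fin n) (Fin n ⊕ Fin n) ℝ := Matrix.fromBlocks Xbᵀ⁻¹ 0 0 Xb with hDb
  have huui : u * ui = 1 := by
    rw [hu, hui, Matrix.fromBlocks_multiply]
    simpa using Matrix.fromBlocks_one
  have huiu : ui * u = 1 := by
    rw [hu, hui, Matrix.fromBlocks_multiply]
    simpa using Matrix.fromBlocks_one
  have hvvi : v * vi = 1 := by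
    rw [hv, hvi, Matrix.fromBlocks_multiply]
    simpa using Matrix.fromBlocks_one
  have hviv : vi * v = 1 := by
    rw [hv, hvi, Matrix.fromBlocks_multiply]
    simpa using Matrix.fromBlocks_one
  have hDDi : D * Di = 1 := by
    rw [hD, hDi, Matrix.fromBlocks_multiply]
    simp only [Matrix.mul_zero, Matrix.zero_mul, add_zero, zero_add, hX2, hXt1]
    exact Matrix.fromBlocks_one
  have hDiD : Di * D = 1 := by
    rw [hD, hDi, Matrix.fromBlocks_multiply]
    simp only [Matrix.mul_zero, Matrix.zero_mul, add_zero, zero_add, hX1, hXt2]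
    exact Matrix.fromBlocks_one
  -- key identity for M
  have keyM : Xᵀ⁻¹ * M - M * X = X + Xᵀ⁻¹ * S := by
    have h := congrArg (fun Z => Xᵀ⁻¹ * Z) hM
    simp only [Matrix.mul_sub, Matrix.mul_add, ← Matrix.mul_assoc] at h
    rw [hXt2, Matrix.one_mul, Matrix.one_mul] at h
    exact h
  -- key identity for N
  have keyN : Xbᵀ⁻¹ * N - N * Xb = -Xbᵀ⁻¹ - Sb * Xb := by
    have h := congrArg (fun Z => Xbᵀ⁻¹ * Z) hN
    simp only [Matrix.mul_sub, Matrix.mul_neg, Matrix.mul_add, Matrix.mul_one,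
      ← Matrix.mul_assoc] at h
    simp only [hXbt2, Matrix.one_mul] at h
    rw [h]
    simp only [Matrix.one_mul, neg_add]
    abel
  -- factorization of c
  have hc : c = ui * Di * u := by
    rw [hui, hDi, hu, Matrix.fromBlocks_multiply, Matrix.fromBlocks_multiply]
    show Matrix.fromBlocks X 0 (X + Xᵀ⁻¹ * S) Xᵀ⁻¹ = _
    refine (Matrix.fromBlocks_inj.mpr ⟨?_, ?_, ?_, ?_⟩).symm
    · simp
    · simp
    · simp only [Matrix.neg_mul, Matrix.one_mul, Matrix.mul_one, Matrix.mul_zero,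
        Matrix.zero_mul, add_zero, zero_add, Matrix.add_mul]
      rw [neg_add_eq_sub]
      exact keyM
    · simp
  -- factorization of cb
  have hcb : cb = vi * Db * v := by
    rw [hvi, hDb, hv, Matrix.fromBlocks_multiply, Matrix.fromBlocks_multiply]
    show Matrix.fromBlocks Xbᵀ⁻¹ (-Xbᵀ⁻¹ - Sb * Xb) 0 Xb = _
    refine (Matrix.fromBlocks_inj.mpr ⟨?_, ?_, ?_, ?_⟩).symm
    · simp
    · simp only [Matrix.one_mul, Matrix.mul_one, Matrix.mul_zero, Matrix.zero_mul,
        add_zero, zero_add, Matrix.neg_mul]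
      rw [← sub_eq_add_neg]
      exact keyN
    · simp
    · simp
  -- inverse of c
  have hcinv : c⁻¹ = ui * D * u := by
    apply Matrix.inv_eq_right_inv
    rw [hc]
    calc ui * Di * u * (ui * D * u) = ui * (Di * (u * (ui * (D * u)))) := by
          simp only [Matrix.mul_assoc]
      _ = ui * (Di * ((u * ui) * (D * u))) := by simp only [Matrix.mul_assoc]
      _ = ui * (Di * (D * u)) := by rw [huui, Matrix.one_mul]
      _ = ui * ((Di * D) * u) := by simp only [Matrix.mul_assoc]
      _ = ui * u := by rw [hDiD, Matrix.one_mul]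
      _ = 1 := huiu
  -- helper commutation identities
  have huiD : ui * D = c⁻¹ * ui := by
    rw [hcinv, Matrix.mul_assoc, huui, Matrix.mul_one]
  have hvcb : v * cb = Db * v := by
    rw [hcb, ← Matrix.mul_assoc, ← Matrix.mul_assoc, hvvi, Matrix.one_mul]
  constructor
  · -- forward direction
    rintro ⟨g, hgsymp, hgc⟩
    have hJJ : Jmat n * Jmat n = -1 := by
      rw [Jmat, Matrix.fromBlocks_multiply]
      simp only [mul_zero, zero_mul, mul_one, one_mul, mul_neg_one, add_zero, zero_add,
        neg_zero]
      rw [← Matrix.fromBlocks_one, Matrix.fromBlocks_neg, neg_zero]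
    have hgl : (-(Jmat n) * gᵀ * Jmat n) * g = 1 := by
      calc (-(Jmat n) * gᵀ * Jmat n) * g = -(Jmat n * (gᵀ * Jmat n * g)) := by
            simp only [Matrix.neg_mul, Matrix.mul_assoc]
        _ = -(Jmat n * Jmat n) := by rw [hgsymp]
        _ = 1 := by rw [hJJ, neg_neg]
    have hgdet : IsUnit g.det := by
      have hd : (-(Jmat n) * gᵀ * Jmat n).det * g.det = 1 := by
        rw [← Matrix.det_mul, hgl, Matrix.det_one]
      exact IsUnit.of_mul_eq_one _ (by rw [mul_comm]; exact hd)
    have hgu : IsUnit g := (Matrix.isUnit_iff_isUnit_det g).mpr hgdet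
    have hg2 : g⁻¹ * g = 1 := Matrix.nonsing_inv_mul g hgdet
    have hgc' : g * c⁻¹ = cb * g := by
      rw [← hgc, Matrix.mul_assoc (g * c⁻¹) g⁻¹ g, hg2, Matrix.mul_one]
    set H : Matrix (Fin n ⊕ Fin n) (Fin n ⊕ Fin n) ℝ := v * g * ui with hHdef
    have hHD : H * D = Db * H := by
      calc H * D = v * g * (ui * D) := by rw [hHdef]; simp only [Matrix.mul_assoc]
        _ = v * g * (c⁻¹ * ui) := by rw [huiD]
        _ = v * (g * c⁻¹) * ui := by simp only [Matrix.mul_assoc]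
        _ = v * (cb * g) * ui := by rw [hgc']
        _ = (v * cb) * (g * ui) := by simp only [Matrix.mul_assoc]
        _ = (Db * v) * (g * ui) := by rw [hvcb]
        _ = Db * H := by simp only [hHdef, Matrix.mul_assoc]
    set H11 := H.toBlocks₁₁ with h11d
    set H12 := H.toBlocks₁₂ with h12d
    set H21 := H.toBlocks₂₁ with h21d
    set H22 := H.toBlocks₂₂ with h22d
    have hHb : H = Matrix.fromBlocks H11 H12 H21 H22 := (Matrix.fromBlocks_toBlocks H).symm
    rw [hHb, hD, hDb, Matrix.fromBlocks_multiply, Matrix.fromBlocks_multiply] at hHD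
    simp only [Matrix.mul_zero, Matrix.zero_mul, add_zero, zero_add] at hHD
    obtain ⟨eq11, eq12, eq21, eq22⟩ := Matrix.fromBlocks_inj.mp hHD
    -- H12 = 0
    have h120 : H12 = 0 := by
      apply aux_sylvester_inj (aux_contracting_transpose hXbc) (aux_contracting_transpose hXc)
      rw [Matrix.mul_assoc, eq12, ← Matrix.mul_assoc, hXbt1, Matrix.one_mul]
    -- H21 = 0
    have h210 : H21 = 0 := by
      apply aux_sylvester_inj hXbc hXc
      have h := congrArg (fun Z => Z * X) eq21
      rw [Matrix.mul_assoc, hX2, Matrix.mul_one] at h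
      exact h
    -- H22 is invertible
    have hHdet : IsUnit H.det := by
      have hvdet : IsUnit v.det :=
        IsUnit.of_mul_eq_one _ (by rw [← Matrix.det_mul, hvvi, Matrix.det_one])
      have huidet : IsUnit ui.det :=
        IsUnit.of_mul_eq_one _ (by rw [← Matrix.det_mul, huiu, Matrix.det_one])
      rw [hHdef, Matrix.det_mul, Matrix.det_mul]
      exact (hvdet.mul hgdet).mul huidet
    have hdetHb : H.det = H11.det * H22.det := by
      rw [hHb, h120, h210, Matrix.det_fromBlocks_zero₂₁]
    have hH22det : IsUnit H22.det := by
      rw [hdetHb] at hHdet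
      exact isUnit_of_mul_isUnit_right hHdet
    have hH22 : IsUnit H22 := (Matrix.isUnit_iff_isUnit_det H22).mpr hH22det
    refine ⟨H22, hH22, ?_⟩
    have hH22inv : H22 * H22⁻¹ = 1 := Matrix.mul_nonsing_inv H22 hH22det
    have h := congrArg (fun Z => Z * H22⁻¹) eq22
    rw [Matrix.mul_assoc Xb H22 H22⁻¹, hH22inv, Matrix.mul_one] at h
    exact h.symm
  · -- backward direction
    rintro ⟨G, hG, hGX⟩
    have hGdet : IsUnit G.det := (Matrix.isUnit_iff_isUnit_det G).mp hG
    have hGt : IsUnit Gᵀ := (Matrix.isUnit_iff_isUnit_det Gᵀ).mpr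
      (by rw [Matrix.det_transpose]; exact hGdet)
    have hGtdet : IsUnit Gᵀ.det := (Matrix.isUnit_iff_isUnit_det Gᵀ).mp hGt
    have hG1 : G * G⁻¹ = 1 := Matrix.mul_nonsing_inv G hGdet
    have hG2 : G⁻¹ * G = 1 := Matrix.nonsing_inv_mul G hGdet
    have hGt1 : Gᵀ * Gᵀ⁻¹ = 1 := Matrix.mul_nonsing_inv Gᵀ hGtdet
    have hGt2 : Gᵀ⁻¹ * Gᵀ = 1 := Matrix.nonsing_inv_mul Gᵀ hGtdet
    have hGtiT : (Gᵀ⁻¹)ᵀ = G⁻¹ := by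
      rw [← Matrix.transpose_nonsing_inv, Matrix.transpose_transpose]
    set w : Matrix (Fin n ⊕ Fin n) (Fin n ⊕ Fin n) ℝ := Matrix.fromBlocks Gᵀ⁻¹ 0 0 G with hw
    set wi : Matrix (Fin n ⊕ Fin n) (Fin n ⊕ Fin n) ℝ := Matrix.fromBlocks Gᵀ 0 0 G⁻¹ with hwi
    have hwwi : w * wi = 1 := by
      rw [hw, hwi, Matrix.fromBlocks_multiply]
      simp only [Matrix.mul_zero, Matrix.zero_mul, add_zero, zero_add, hGt2, hG1]
      exact Matrix.fromBlocks_one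
    have hwiw : wi * w = 1 := by
      rw [hw, hwi, Matrix.fromBlocks_multiply]
      simp only [Matrix.mul_zero, Matrix.zero_mul, add_zero, zero_add, hGt1, hG2]
      exact Matrix.fromBlocks_one
    -- Xb transposed inverse
    have hXbT : Xbᵀ = Gᵀ⁻¹ * X * Gᵀ := by
      rw [hGX, Matrix.transpose_mul, Matrix.transpose_mul, Matrix.transpose_transpose,
        Matrix.transpose_nonsing_inv, Matrix.mul_assoc]
    have hXbTinv : Xbᵀ⁻¹ = Gᵀ⁻¹ * X⁻¹ * Gᵀ := by
      apply Matrix.inv_eq_right_inv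
      rw [hXbT]
      calc Gᵀ⁻¹ * X * Gᵀ * (Gᵀ⁻¹ * X⁻¹ * Gᵀ)
          = Gᵀ⁻¹ * (X * ((Gᵀ * Gᵀ⁻¹) * (X⁻¹ * Gᵀ))) := by simp only [Matrix.mul_assoc]
        _ = Gᵀ⁻¹ * (X * (X⁻¹ * Gᵀ)) := by rw [hGt1, Matrix.one_mul]
        _ = Gᵀ⁻¹ * ((X * X⁻¹) * Gᵀ) := by simp only [Matrix.mul_assoc]
        _ = Gᵀ⁻¹ * Gᵀ := by rw [hX1, Matrix.one_mul]
        _ = 1 := hGt2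
    have hwDwi : w * D * wi = Db := by
      rw [hw, hD, hwi, hDb, Matrix.fromBlocks_multiply, Matrix.fromBlocks_multiply]
      simp only [Matrix.mul_zero, Matrix.zero_mul, add_zero, zero_add]
      refine Matrix.fromBlocks_inj.mpr ⟨?_, rfl, rfl, ?_⟩
      · rw [hXbTinv]
      · rw [hGX]
    -- the symplectic conjugating element
    refine ⟨vi * w * u, ?_, ?_⟩
    · -- symplecticity
      have hscu : IsSymplectic u := by
        rw [hu]
        apply aux_isSymplectic_fromBlocks
        · rw [Matrix.transpose_one, Matrix.one_mul, Matrix.mul_one, hMsym]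
        · simp
        · simp
      have hscvi : IsSymplectic vi := by
        rw [hvi]
        apply aux_isSymplectic_fromBlocks
        · simp
        · rw [Matrix.transpose_neg, Matrix.transpose_one, Matrix.one_mul, Matrix.mul_one, hNsym]
        · simp
      have hscw : IsSymplectic w := by
        rw [hw]
        apply aux_isSymplectic_fromBlocks
        · simp
        · simp
        · rw [hGtiT]
          simp [hG2]
      exact aux_isSymplectic_mul (aux_isSymplectic_mul hscvi hscw) hscu
    · -- conjugation identity
      have hgi : (vi * w * u)⁻¹ = ui * wi * v := by
        apply Matrix.inv_eq_right_inv
        calc vi * w * u * (ui * wi * v)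
            = vi * (w * ((u * ui) * (wi * v))) := by simp only [Matrix.mul_assoc]
          _ = vi * (w * (wi * v)) := by rw [huui, Matrix.one_mul]
          _ = vi * ((w * wi) * v) := by simp only [Matrix.mul_assoc]
          _ = vi * v := by rw [hwwi, Matrix.one_mul]
          _ = 1 := hviv
      rw [hgi, hcinv]
      calc vi * w * u * (ui * D * u) * (ui * wi * v)
          = vi * (w * ((u * ui) * (D * ((u * ui) * (wi * v))))) := by
            simp only [Matrix.mul_assoc]
        _ = vi * (w * (D * (wi * v))) := by rw [huui, Matrix.one_mul, Matrix.one_mul]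
        _ = vi * (w * D * wi) * v := by simp only [Matrix.mul_assoc]
        _ = vi * Db * v := by rw [hwDwi]
        _ = cb := hcb.symm
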